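/- Let p be a prime, let X be a profinite set, and let R be a p-adically complete ℤ_p-algebra. Then restriction along the inclusion of locally constant functions into continuous functions gives a bijection from the set of ℤ_p-linear maps C(X, ℤ_p) → R onto the set of ℤ_p-linear maps LC(X, ℤ_p) → R; that is, every R-valued distribution on X (ℤ_p-linear functional on locally constant functions) extends uniquely to an R-valued measure on X. -/

import Mathlib

open Submodule

section Aux

variable {p : ℕ} [hp : Fact p.Prime]

/-- A choice of "division": a section of multiplication by `c`. -/
noncomputable def pdiv (c y : ℤ_[p]) : ℤ_[p] :=
  @dite _ (∃ z, y = c * z) (Classical.propDecidable _) (fun h => h.choose) fun _ => 0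

lemma pdiv_spec {c y : ℤ_[p]} (h : c ∣ y) : c * pdiv c y = y := by
  obtain ⟨z, hz⟩ := h
  have h' : ∃ z, y = c * z := ⟨z, hz⟩
  rw [pdiv, dif_pos h']
  exact h'.choose_spec.symm

lemma continuous_toZModPow (n : ℕ) :
    Continuous (PadicInt.toZModPow (p := p) n) := by
  rw [continuous_discrete_rng]
  intro a
  rcases Set.eq_empty_or_nonempty ((PadicInt.toZModPow (p := p) n) ⁻¹' {a}) with h | ⟨x₀, hx₀⟩
  · rw [h]; exact isOpen_empty
  · have hx₀' : PadicInt.toZModPow (p := p) n x₀ = a := hx₀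
    have : (PadicInt.toZModPow (p := p) n) ⁻¹' {a} =
        Metric.closedBall x₀ ((p : ℝ) ^ (-n : ℤ)) := by
      ext x
      simp only [Set.mem_preimage, Set.mem_singleton_iff, Metric.mem_closedBall,
        dist_eq_norm]
      rw [PadicInt.norm_le_pow_iff_mem_span_pow, ← PadicInt.ker_toZModPow, RingHom.mem_ker,
        map_sub, sub_eq_zero, hx₀']
    rw [this]
    exact IsUltrametricDist.isOpen_closedBall _
      (zpow_ne_zero _ (by exact_mod_cast hp.out.ne_zero))

variable {X : Type*} [TopologicalSpace X]

/-- The `n`-th locally constant approximation of a continuous `ℤ_p`-valued function. -/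
noncomputable def approx (n : ℕ) (f : C(X, ℤ_[p])) : LocallyConstant X ℤ_[p] :=
  ⟨fun x => ((PadicInt.toZModPow n (f x)).val : ℤ_[p]),
    (IsLocallyConstant.of_discrete
      (fun a : ZMod (p ^ n) => ((a.val : ℤ_[p])))).comp_continuous
        ((continuous_toZModPow n).comp f.continuous)⟩

lemma dvd_sub_approx (n : ℕ) (f : C(X, ℤ_[p])) (x : X) :
    (p : ℤ_[p]) ^ n ∣ f x - approx n f x := by
  haveI : NeZero (p ^ n) := ⟨pow_ne_zero n hp.out.ne_zero⟩
  have h0 : PadicInt.toZModPow n (f x - approx n f x) = 0 := by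
    rw [map_sub, sub_eq_zero]
    show _ = PadicInt.toZModPow n (((PadicInt.toZModPow n (f x)).val : ℤ_[p]))
    rw [map_natCast]
    exact (ZMod.natCast_rightInverse _).symm
  rw [← Ideal.mem_span_singleton, ← PadicInt.ker_toZModPow, RingHom.mem_ker]
  exact h0

lemma exists_lc_div (n : ℕ) (g : LocallyConstant X ℤ_[p])
    (hg : ∀ x, (p : ℤ_[p]) ^ n ∣ g x) :
    ∃ h : LocallyConstant X ℤ_[p], g = ((p : ℤ_[p]) ^ n) • h := by
  refine ⟨g.map (pdiv ((p : ℤ_[p]) ^ n)), ?_⟩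
  ext x
  show g x = (p : ℤ_[p]) ^ n * pdiv ((p : ℤ_[p]) ^ n) (g x)
  exact (pdiv_spec (hg x)).symm

lemma exists_cont_div (n : ℕ) (w : C(X, ℤ_[p]))
    (hw : ∀ x, (p : ℤ_[p]) ^ n ∣ w x) :
    ∃ h : C(X, ℤ_[p]), w = ((p : ℤ_[p]) ^ n) • h := by
  have key : ∀ a b : ℤ_[p], (p : ℤ_[p]) ^ n ∣ a → (p : ℤ_[p]) ^ n ∣ b →
      ‖pdiv ((p : ℤ_[p]) ^ n) a - pdiv ((p : ℤ_[p]) ^ n) b‖ = (p : ℝ) ^ n * ‖a - b‖ := by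
    intro a b ha hb
    have hab : a - b = (p : ℤ_[p]) ^ n *
        (pdiv ((p : ℤ_[p]) ^ n) a - pdiv ((p : ℤ_[p]) ^ n) b) := by
      rw [mul_sub, pdiv_spec ha, pdiv_spec hb]
    have hnorm := congrArg norm hab
    rw [norm_mul, norm_pow, PadicInt.norm_p] at hnorm
    have hppos : (0 : ℝ) < p := by exact_mod_cast hp.out.pos
    rw [hnorm]
    rw [inv_pow, ← mul_assoc, mul_inv_cancel₀ (by positivity), one_mul]
  have hcont : Continuous (fun x => pdiv ((p : ℤ_[p]) ^ n) (w x)) := by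
    refine continuous_iff_continuousAt.mpr fun x₀ => ?_
    rw [ContinuousAt, Metric.tendsto_nhds]
    intro ε hε
    have hppos : (0 : ℝ) < (p : ℝ) ^ n := by
      have : (0 : ℝ) < p := by exact_mod_cast hp.out.pos
      positivity
    have hw' := Metric.tendsto_nhds.mp ((map_continuous w).tendsto x₀)
      (ε / (p : ℝ) ^ n) (by positivity)
    filter_upwards [hw'] with x hx
    rw [dist_eq_norm] at hx ⊢
    rw [key _ _ (hw x) (hw x₀)]
    calc (p : ℝ) ^ n * ‖w x - w x₀‖ < (p : ℝ) ^ n * (ε / (p : ℝ) ^ n) :=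
          (mul_lt_mul_iff_right₀ hppos).mpr hx
      _ = ε := by field_simp
  refine ⟨⟨fun x => pdiv ((p : ℤ_[p]) ^ n) (w x), hcont⟩, ?_⟩
  ext x
  show w x = (p : ℤ_[p]) ^ n * pdiv ((p : ℤ_[p]) ^ n) (w x)
  exact (pdiv_spec (hw x)).symm

lemma smul_mem_pow {R : Type*} [CommRing R] [Algebra ℤ_[p] R] (n : ℕ) (r : R) :
    ((p : ℤ_[p]) ^ n) • r ∈ ((Ideal.span {(p : R)}) ^ n • ⊤ : Submodule R R) := by
  have h1 : ((Ideal.span {(p : R)}) ^ n • ⊤ : Submodule R R) = Ideal.span {(p : R) ^ n} := by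
    rw [smul_eq_mul, Ideal.mul_top, Ideal.span_singleton_pow]
  rw [h1, Ideal.mem_span_singleton]
  refine ⟨r, ?_⟩
  rw [Algebra.smul_def, map_pow, map_natCast]

end Aux

/-- Let `p` be a prime, `X` a profinite set, and `R` a
`p`-adically complete `ℤ_p`-algebra.  Restriction along the inclusion of locally
constant functions into continuous functions is a bijection from the set of
`ℤ_p`-linear maps `C(X, ℤ_p) → R` onto the set of `ℤ_p`-linear maps
`LC(X, ℤ_p) → R`: every `R`-valued distribution extends uniquely to a measure. -/
theorem distribution_extends_uniquely_to_measure
    (p : ℕ) [Fact p.Prime]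
    (X : Type*) [TopologicalSpace X] [CompactSpace X] [T2Space X]
    [TotallyDisconnectedSpace X]
    (R : Type*) [CommRing R] [Algebra ℤ_[p] R]
    [IsAdicComplete (Ideal.span {(p : R)}) R] :
    Function.Bijective
      (fun μ : C(X, ℤ_[p]) →ₗ[ℤ_[p]] R =>
        μ ∘ₗ (LocallyConstant.toContinuousMapLinearMap ℤ_[p] :
          LocallyConstant X ℤ_[p] →ₗ[ℤ_[p]] C(X, ℤ_[p]))) := by
  set I : Ideal R := Ideal.span {(p : R)} with hI
  have hhaus : IsHausdorff I R := IsAdicComplete.toIsHausdorff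
  have hprec : IsPrecomplete I R := IsAdicComplete.toIsPrecomplete
  constructor
  · -- injectivity
    intro μ₁ μ₂ hcomp
    have hlc : ∀ g : LocallyConstant X ℤ_[p], μ₁ g.toContinuousMap = μ₂ g.toContinuousMap := by
      intro g
      exact congrArg (fun ν => ν g) hcomp
    ext f
    have : μ₁ f - μ₂ f = 0 := by
      apply hhaus.haus
      intro n
      rw [SModEq.zero]
      obtain ⟨h, hh⟩ := exists_cont_div n (f - (approx n f).toContinuousMap)
        (fun x => by simpa using dvd_sub_approx n f x)
      have e1 : μ₁ f - μ₁ (approx n f).toContinuousMap ∈ (I ^ n • ⊤ : Submodule R R) := by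
        rw [← map_sub, hh, map_smul]; exact smul_mem_pow n _
      have e2 : μ₂ f - μ₂ (approx n f).toContinuousMap ∈ (I ^ n • ⊤ : Submodule R R) := by
        rw [← map_sub, hh, map_smul]; exact smul_mem_pow n _
      have : μ₁ f - μ₂ f =
          (μ₁ f - μ₁ (approx n f).toContinuousMap)
            - (μ₂ f - μ₂ (approx n f).toContinuousMap) := by
        rw [hlc (approx n f)]; ring
      rw [this]
      exact Submodule.sub_mem _ e1 e2
    exact sub_eq_zero.mp this
  · -- surjectivity
    intro ν
    have nu_mem : ∀ (n : ℕ) (g : LocallyConstant X ℤ_[p]),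
        (∀ x, (p : ℤ_[p]) ^ n ∣ g x) → ν g ∈ (I ^ n • ⊤ : Submodule R R) := by
      intro n g hg
      obtain ⟨h, rfl⟩ := exists_lc_div n g hg
      rw [map_smul]
      exact smul_mem_pow n _
    have key : ∀ f : C(X, ℤ_[p]), ∃ L : R, ∀ n : ℕ,
        ν (approx n f) ≡ L [SMOD (I ^ n • ⊤ : Submodule R R)] := by
      intro f
      apply hprec.prec
      intro m n hmn
      rw [SModEq.sub_mem, ← map_sub]
      apply nu_mem
      intro x
      have h1 : (p : ℤ_[p]) ^ m ∣ f x - approx m f x :=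
        dvd_trans (pow_dvd_pow _ le_rfl) (dvd_sub_approx m f x)
      have h2 : (p : ℤ_[p]) ^ m ∣ f x - approx n f x :=
        dvd_trans (pow_dvd_pow _ hmn) (dvd_sub_approx n f x)
      have hx : (approx m f - approx n f) x
          = (f x - approx n f x) - (f x - approx m f x) := by
        simp only [LocallyConstant.sub_apply]; ring
      rw [hx]
      exact dvd_sub h2 h1
    choose L hL using key
    have hLmem : ∀ (f : C(X, ℤ_[p])) (n : ℕ),
        ν (approx n f) - L f ∈ (I ^ n • ⊤ : Submodule R R) := by
      intro f n
      exact SModEq.sub_mem.mp (hL f n)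
    -- additivity
    have hadd : ∀ f f' : C(X, ℤ_[p]), L (f + f') = L f + L f' := by
      intro f f'
      have h0 : L (f + f') - (L f + L f') = 0 := by
        apply hhaus.haus
        intro n
        rw [SModEq.zero]
        have mid : ν (approx n (f + f')) - ν (approx n f) - ν (approx n f')
            ∈ (I ^ n • ⊤ : Submodule R R) := by
          rw [← map_sub, ← map_sub]
          apply nu_mem
          intro x
          have h1 := dvd_sub_approx n f x
          have h2 := dvd_sub_approx n f' x
          have h3 := dvd_sub_approx n (f + f') x
          have hx : (approx n (f + f') - approx n f - approx n f') x
              = (f x - approx n f x) + (f' x - approx n f' x)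
                - ((f + f') x - approx n (f + f') x) := by
            simp only [LocallyConstant.sub_apply, ContinuousMap.add_apply]; ring
          rw [hx]
          exact dvd_sub (dvd_add h1 h2) h3
        have heq : L (f + f') - (L f + L f') =
            (ν (approx n (f + f')) - ν (approx n f) - ν (approx n f'))
              - (ν (approx n (f + f')) - L (f + f'))
              + (ν (approx n f) - L f) + (ν (approx n f') - L f') := by ring
        rw [heq]
        exact Submodule.add_mem _ (Submodule.add_mem _
          (Submodule.sub_mem _ mid (hLmem (f + f') n)) (hLmem f n)) (hLmem f' n)
      exact sub_eq_zero.mp h0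
    -- scalar multiplication
    have hsmul : ∀ (c : ℤ_[p]) (f : C(X, ℤ_[p])), L (c • f) = c • L f := by
      intro c f
      have h0 : L (c • f) - c • L f = 0 := by
        apply hhaus.haus
        intro n
        rw [SModEq.zero]
        have mid : ν (approx n (c • f)) - c • ν (approx n f)
            ∈ (I ^ n • ⊤ : Submodule R R) := by
          rw [← map_smul, ← map_sub]
          apply nu_mem
          intro x
          have h1 := dvd_sub_approx n f x
          have h3 := dvd_sub_approx n (c • f) x
          have hx : (approx n (c • f) - c • approx n f) x
              = c * (f x - approx n f x) - ((c • f) x - approx n (c • f) x) := by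
            simp only [LocallyConstant.sub_apply, LocallyConstant.smul_apply,
              ContinuousMap.smul_apply, smul_eq_mul]
            ring
          rw [hx]
          exact dvd_sub (Dvd.dvd.mul_left h1 c) h3
        have hc : c • (ν (approx n f) - L f) ∈ (I ^ n • ⊤ : Submodule R R) := by
          have hmem := hLmem f n
          have hsm : ((I : Ideal R) ^ n • ⊤ : Submodule R R) = I ^ n := by
            rw [smul_eq_mul, Ideal.mul_top]
          rw [hsm] at hmem ⊢
          rw [Algebra.smul_def]
          exact Ideal.mul_mem_left _ _ hmem
        have heq : L (c • f) - c • L f =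
            (ν (approx n (c • f)) - c • ν (approx n f))
              - (ν (approx n (c • f)) - L (c • f))
              + c • (ν (approx n f) - L f) := by
          rw [smul_sub]; ring
        rw [heq]
        exact Submodule.add_mem _ (Submodule.sub_mem _ mid (hLmem (c • f) n)) hc
      exact sub_eq_zero.mp h0
    refine ⟨{ toFun := L, map_add' := hadd, map_smul' := hsmul }, ?_⟩
    ext g
    show L g.toContinuousMap = ν g
    have h0 : L g.toContinuousMap - ν g = 0 := by
      apply hhaus.haus
      intro n
      rw [SModEq.zero]
      have mid : ν (approx n g.toContinuousMap) - ν g ∈ (I ^ n • ⊤ : Submodule R R) := by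
        rw [← map_sub]
        apply nu_mem
        intro x
        have h1 := dvd_sub_approx n g.toContinuousMap x
        have hx : (approx n g.toContinuousMap - g) x
            = -(g.toContinuousMap x - approx n g.toContinuousMap x) := by
          simp only [LocallyConstant.sub_apply]
          have : g.toContinuousMap x = g x := rfl
          rw [← this]; ring
        rw [hx]
        exact Dvd.dvd.neg_right h1
      have heq : L g.toContinuousMap - ν g =
          (ν (approx n g.toContinuousMap) - ν g)
            - (ν (approx n g.toContinuousMap) - L g.toContinuousMap) := by ring
      rw [heq]
      exact Submodule.sub_mem _ mid (hLmem g.toContinuousMap n)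
    exact sub_eq_zero.mp h0
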